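/- Let S_ν be a geometric sum with i.i.d. increments of distribution F and parameter p, and let h(x) ≤ x/2. Write Δ(y) = P(S_ν > y)/((1/p)F̄(y)) - 1 and Δ[a,b] = sup_{a≤y≤b} Δ(y). Then P(S_ν > x | ν > 1) ≤ (1/p)(1 + Δ(x - h(x))) F̄(x - h(x)) F(h(x)) + (1/p)(1 + Δ[h(x), x - h(x)]) ∫_{h(x)}^{x-h(x)} F̄(x-y) dF(y) + F̄(x - h(x)). -/

import Mathlib

open Filter MeasureTheory ProbabilityTheory Set

noncomputable def tail (μ : Measure ℝ) (x : ℝ) : ℝ := (μ (Set.Ioi x)).toReal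

/-- Relative error of the asymptotic approximation for the geometric sum. -/
noncomputable def Delta {Ω : Type*} [MeasureSpace Ω] (S : Ω → ℝ) (p : ℝ)
    (μ : Measure ℝ) (y : ℝ) : ℝ :=
  (ℙ {ω | y < S ω}).toReal / ((1 / p) * tail μ y) - 1

noncomputable def DeltaSup {Ω : Type*} [MeasureSpace Ω] (S : Ω → ℝ) (p : ℝ)
    (μ : Measure ℝ) (a b : ℝ) : ℝ :=
  sSup (Delta S p μ '' Set.Icc a b)

set_option linter.unusedSectionVars false
open scoped ENNReal

section Aux

variable {Ω : Type*} [MeasureSpace Ω] [IsProbabilityMeasure (ℙ : Measure Ω)]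

lemma meas_S (X : ℕ → Ω → ℝ) (hXm : ∀ i, Measurable (X i)) (ν : Ω → ℕ) (hνm : Measurable ν) :
    Measurable (fun ω => ∑ i ∈ Finset.range (ν ω), X i ω) := by
  have h : (fun ω => ∑ i ∈ Finset.range (ν ω), X i ω)
      = (fun q : Ω × ℕ => ∑ i ∈ Finset.range q.2, X i q.1) ∘ (fun ω => (ω, ν ω)) := rfl
  rw [h]
  exact (measurable_from_prod_countable_left
    (fun k => by exact Finset.measurable_sum (Finset.range k) (fun i _ => hXm i))).comp (measurable_id.prodMk hνm)

lemma indep_head (X : ℕ → Ω → ℝ) (hXm : ∀ i, Measurable (X i))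
    (hXi : iIndepFun X ℙ) (m k : ℕ) :
    IndepFun (X m) (fun ω => ∑ i ∈ Finset.range k, X (m + 1 + i) ω) ℙ := by
  classical
  have h0s : m ∉ (Finset.range k).image (fun i => m + 1 + i) := by
    simp only [Finset.mem_image, Finset.mem_range, not_exists]
    intro i
    omega
  have H := hXi.indepFun_finsetSum_of_notMem hXm h0s
  have hsum_eq : (∑ j ∈ (Finset.range k).image (fun i => m + 1 + i), X j)
      = fun ω => ∑ i ∈ Finset.range k, X (m + 1 + i) ω := by
    funext ω
    rw [Finset.sum_apply]
    rw [Finset.sum_image (fun a _ b _ hab => by omega)]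
  rw [hsum_eq] at H
  exact H.symm

lemma law_sum_shift (μ : Measure ℝ) (X : ℕ → Ω → ℝ) (hXm : ∀ i, Measurable (X i))
    (hXd : ∀ i, Measure.map (X i) ℙ = μ)
    (hXi : iIndepFun X ℙ) :
    ∀ n m, Measure.map (fun ω => ∑ i ∈ Finset.range n, X (m + i) ω) ℙ
      = Measure.map (fun ω => ∑ i ∈ Finset.range n, X i ω) ℙ := by
  intro n
  induction n with
  | zero => intro m; simp
  | succ n ih =>
    have step : ∀ m, Measure.map (fun ω => ∑ i ∈ Finset.range (n+1), X (m + i) ω) ℙ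
        = Measure.map (fun q : ℝ × ℝ => q.1 + q.2)
            (μ.prod (Measure.map (fun ω => ∑ i ∈ Finset.range n, X i ω) ℙ)) := by
      intro m
      set T : Ω → ℝ := fun ω => ∑ i ∈ Finset.range n, X (m + 1 + i) ω with hTdef
      have hTm : Measurable T := Finset.measurable_sum _ (fun i _ => hXm (m+1+i))
      have hTd : Measure.map T ℙ = Measure.map (fun ω => ∑ i ∈ Finset.range n, X i ω) ℙ :=
        ih (m+1)
      have hrw : (fun ω => ∑ i ∈ Finset.range (n+1), X (m + i) ω)
          = fun ω => X m ω + T ω := by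
        funext ω
        rw [Finset.sum_range_succ', add_comm]
        congr 1
        exact Finset.sum_congr rfl fun i _ => by congr 1; omega
      have hind : IndepFun (X m) T ℙ := indep_head X hXm hXi m n
      have hpair := (indepFun_iff_map_prod_eq_prod_map_map
        (hXm m).aemeasurable hTm.aemeasurable).mp hind
      have hcomp : (fun ω => X m ω + T ω)
          = (fun q : ℝ × ℝ => q.1 + q.2) ∘ (fun ω => (X m ω, T ω)) := rfl
      rw [hrw, hcomp, ← Measure.map_map (g := fun q : ℝ × ℝ => q.1 + q.2) (measurable_fst.add measurable_snd)
        ((hXm m).prodMk hTm), hpair, hXd m, hTd]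
    intro m
    rw [step m]
    have := step 0
    simp only [Nat.zero_add] at this
    rw [← this]

lemma sum_succ_tail_eq (μ : Measure ℝ) [IsProbabilityMeasure μ]
    (X : ℕ → Ω → ℝ) (hXm : ∀ i, Measurable (X i))
    (hXd : ∀ i, Measure.map (X i) ℙ = μ)
    (hXi : iIndepFun X ℙ) (k : ℕ) (t : ℝ) :
    ℙ {ω | t < ∑ i ∈ Finset.range (k+1), X i ω}
      = ∫⁻ u, (Measure.map (fun ω => ∑ i ∈ Finset.range k, X i ω) ℙ) (Set.Ioi (t - u)) ∂μ := by
  set T : Ω → ℝ := fun ω => ∑ i ∈ Finset.range k, X (0 + 1 + i) ω with hTdef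
  have hTm : Measurable T := Finset.measurable_sum _ (fun i _ => hXm _)
  have hTd : Measure.map T ℙ = Measure.map (fun ω => ∑ i ∈ Finset.range k, X i ω) ℙ :=
    law_sum_shift μ X hXm hXd hXi k 1
  have hsum : ∀ ω, ∑ i ∈ Finset.range (k+1), X i ω = X 0 ω + T ω := by
    intro ω
    rw [Finset.sum_range_succ', add_comm]
    congr 1
    exact Finset.sum_congr rfl fun i _ => by congr 1; omega
  have hind : IndepFun (X 0) T ℙ := indep_head X hXm hXi 0 k
  have hsetm : MeasurableSet {q : ℝ × ℝ | t < q.1 + q.2} :=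
    measurableSet_lt measurable_const (measurable_fst.add measurable_snd)
  have hpair := (indepFun_iff_map_prod_eq_prod_map_map
    (hXm 0).aemeasurable hTm.aemeasurable).mp hind
  have hrw : {ω | t < ∑ i ∈ Finset.range (k+1), X i ω}
      = (fun ω => (X 0 ω, T ω)) ⁻¹' {q : ℝ × ℝ | t < q.1 + q.2} := by
    ext ω
    simp [hsum ω]
  haveI : IsProbabilityMeasure (Measure.map (fun ω => ∑ i ∈ Finset.range k, X i ω) ℙ) :=
    Measure.isProbabilityMeasure_map (Finset.measurable_sum _ fun i _ => hXm i).aemeasurable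
  rw [hrw, ← Measure.map_apply ((hXm 0).prodMk hTm) hsetm, hpair, hXd 0, hTd,
    Measure.prod_apply hsetm]
  refine lintegral_congr fun u => ?_
  congr 1
  ext v
  simp only [mem_preimage, mem_setOf_eq, mem_Ioi]
  rw [sub_lt_iff_lt_add']

end Aux
section Aux2

variable {Ω : Type*} [MeasureSpace Ω] [IsProbabilityMeasure (ℙ : Measure Ω)]

lemma geom_succ (ν : Ω → ℕ) (p : ℝ)
    (hgeom : ∀ k : ℕ, 1 ≤ k →
      ℙ {ω | ν ω = k} = ENNReal.ofReal (p * (1 - p) ^ (k - 1))) (k : ℕ) :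
    ℙ {ω | ν ω = k + 1} = ENNReal.ofReal (p * (1 - p) ^ k) := by
  simpa using hgeom (k+1) (by omega)

lemma geom_tsum (p : ℝ) (hp0 : 0 < p) (hp1 : p < 1) :
    ∑' k : ℕ, ENNReal.ofReal (p * (1 - p) ^ k) = 1 := by
  have h0 : (0:ℝ) ≤ 1 - p := by linarith
  have h1 : (1:ℝ) - p < 1 := by linarith
  rw [← ENNReal.ofReal_tsum_of_nonneg (fun k => mul_nonneg hp0.le (pow_nonneg h0 k))
    ((summable_geometric_of_lt_one h0 h1).mul_left p)]
  rw [tsum_mul_left, tsum_geometric_of_lt_one h0 h1]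
  have : p * (1 - (1 - p))⁻¹ = 1 := by
    rw [sub_sub_cancel, mul_inv_cancel₀ hp0.ne']
  rw [this, ENNReal.ofReal_one]

lemma nu_meas (ν : Ω → ℕ) (hνm : Measurable ν) (k : ℕ) :
    MeasurableSet {ω | ν ω = k} := hνm (measurableSet_singleton k)

lemma nu_zero (ν : Ω → ℕ) (hνm : Measurable ν) (p : ℝ) (hp0 : 0 < p) (hp1 : p < 1)
    (hgeom : ∀ k : ℕ, 1 ≤ k →
      ℙ {ω | ν ω = k} = ENNReal.ofReal (p * (1 - p) ^ (k - 1))) :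
    ℙ {ω | ν ω = 0} = 0 := by
  have hdisj : Pairwise (Function.onFun Disjoint fun k : ℕ => {ω | ν ω = k + 1}) := by
    intro a b hab
    simp only [Function.onFun, Set.disjoint_left]
    intro ω ha hb
    simp only [mem_setOf_eq] at ha hb
    omega
  have hUnion : ℙ (⋃ k : ℕ, {ω | ν ω = k + 1}) = 1 := by
    rw [measure_iUnion hdisj (fun k => nu_meas ν hνm (k+1))]
    rw [tsum_congr (geom_succ ν p hgeom)]
    exact geom_tsum p hp0 hp1
  have hcompl : {ω | ν ω = 0} = (⋃ k : ℕ, {ω | ν ω = k + 1})ᶜ := by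
    ext ω
    simp only [mem_setOf_eq, mem_compl_iff, mem_iUnion, not_exists]
    constructor
    · intro h k; omega
    · intro h
      by_contra h0
      exact h (ν ω - 1) (by omega)
  rw [hcompl, measure_compl (MeasurableSet.iUnion fun k => nu_meas ν hνm (k+1))
    (measure_ne_top _ _), hUnion, measure_univ, tsub_self]

lemma nu_gt_one (ν : Ω → ℕ) (hνm : Measurable ν) (p : ℝ) (hp0 : 0 < p) (hp1 : p < 1)
    (hgeom : ∀ k : ℕ, 1 ≤ k →
      ℙ {ω | ν ω = k} = ENNReal.ofReal (p * (1 - p) ^ (k - 1))) :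
    ℙ {ω | 1 < ν ω} = ENNReal.ofReal (1 - p) := by
  have h0 : (0:ℝ) ≤ 1 - p := by linarith
  have hrw : {ω | 1 < ν ω} = ⋃ k : ℕ, {ω | ν ω = k + 2} := by
    ext ω
    simp only [mem_setOf_eq, mem_iUnion]
    constructor
    · intro hk; exact ⟨ν ω - 2, by omega⟩
    · rintro ⟨k, hk⟩; omega
  have hdisj : Pairwise (Function.onFun Disjoint fun k : ℕ => {ω | ν ω = k + 2}) := by
    intro a b hab
    simp only [Function.onFun, Set.disjoint_left]
    intro ω ha hb
    simp only [mem_setOf_eq] at ha hb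
    omega
  rw [hrw, measure_iUnion hdisj (fun k => nu_meas ν hνm (k+2))]
  have : ∀ k : ℕ, ℙ {ω | ν ω = k + 2} = ENNReal.ofReal (1 - p) *
      ENNReal.ofReal (p * (1 - p) ^ k) := by
    intro k
    rw [show k + 2 = (k+1) + 1 by omega, geom_succ ν p hgeom (k+1),
      ← ENNReal.ofReal_mul h0]
    congr 1
    ring
  rw [tsum_congr this, ENNReal.tsum_mul_left, geom_tsum p hp0 hp1, mul_one]

end Aux2
section Aux3

variable {Ω : Type*} [MeasureSpace Ω] [IsProbabilityMeasure (ℙ : Measure Ω)]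

lemma vec_event_meas (k : ℕ) (t : ℝ) :
    MeasurableSet {y : ℕ → ℝ | t < ∑ i ∈ Finset.range k, y i} :=
  measurableSet_lt measurable_const
    (by exact Finset.measurable_sum (Finset.range k) fun i _ => measurable_pi_apply i)

lemma inter_event_eq (X : ℕ → Ω → ℝ) (ν : Ω → ℕ) (k : ℕ) (t : ℝ) :
    {ω | t < ∑ i ∈ Finset.range (ν ω), X i ω} ∩ {ω | ν ω = k}
      = ν ⁻¹' {k} ∩ (fun ω => fun i => X i ω) ⁻¹' {y : ℕ → ℝ | t < ∑ i ∈ Finset.range k, y i} := by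
  ext ω
  simp only [mem_inter_iff, mem_setOf_eq, mem_preimage, mem_singleton_iff]
  constructor
  · rintro ⟨hx, hk⟩
    rw [hk] at hx
    exact ⟨hk, hx⟩
  · rintro ⟨hk, hx⟩
    subst hk
    exact ⟨hx, rfl⟩

lemma prob_inter_indep (X : ℕ → Ω → ℝ) (hXm : ∀ i, Measurable (X i))
    (ν : Ω → ℕ) (hνm : Measurable ν)
    (hνX : IndepFun ν (fun ω i => X i ω) ℙ) (k : ℕ) (t : ℝ) :
    ℙ ({ω | t < ∑ i ∈ Finset.range (ν ω), X i ω} ∩ {ω | ν ω = k})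
      = ℙ {ω | ν ω = k} *
        Measure.map (fun ω => ∑ i ∈ Finset.range k, X i ω) ℙ (Set.Ioi t) := by
  rw [inter_event_eq]
  rw [hνX.measure_inter_preimage_eq_mul _ _ (measurableSet_singleton k) (vec_event_meas k t)]
  congr 1
  rw [Measure.map_apply (by exact Finset.measurable_sum (Finset.range k) fun i _ => hXm i)
    measurableSet_Ioi]
  rfl

lemma geom_tail (μ : Measure ℝ) [IsProbabilityMeasure μ]
    (X : ℕ → Ω → ℝ) (hXm : ∀ i, Measurable (X i))
    (hXi : iIndepFun X ℙ)
    (ν : Ω → ℕ) (hνm : Measurable ν)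
    (p : ℝ) (hp0 : 0 < p) (hp1 : p < 1)
    (hgeom : ∀ k : ℕ, 1 ≤ k →
      ℙ {ω | ν ω = k} = ENNReal.ofReal (p * (1 - p) ^ (k - 1)))
    (hνX : IndepFun ν (fun ω i => X i ω) ℙ) (t : ℝ) :
    ℙ {ω | t < ∑ i ∈ Finset.range (ν ω), X i ω}
      = ∑' k : ℕ, ℙ {ω | ν ω = k + 1} *
          Measure.map (fun ω => ∑ i ∈ Finset.range (k+1), X i ω) ℙ (Set.Ioi t) := by
  set E := {ω | t < ∑ i ∈ Finset.range (ν ω), X i ω} with hE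
  have hEm : MeasurableSet E := measurableSet_lt measurable_const (meas_S X hXm ν hνm)
  have hdiff : ℙ E = ℙ (E \ {ω | ν ω = 0}) :=
    (measure_diff_null (nu_zero ν hνm p hp0 hp1 hgeom)).symm
  have hrw : E \ {ω | ν ω = 0} = ⋃ k : ℕ, E ∩ {ω | ν ω = k + 1} := by
    ext ω
    simp only [mem_diff, mem_setOf_eq, mem_iUnion, mem_inter_iff]
    constructor
    · rintro ⟨hx, h0⟩
      exact ⟨ν ω - 1, hx, by omega⟩
    · rintro ⟨k, hx, hk⟩
      exact ⟨hx, by omega⟩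
  have hdisj : Pairwise (Function.onFun Disjoint fun k : ℕ => E ∩ {ω | ν ω = k + 1}) := by
    intro a b hab
    simp only [Function.onFun, Set.disjoint_left]
    rintro ω ⟨-, ha⟩ ⟨-, hb⟩
    simp only [mem_setOf_eq] at ha hb
    omega
  rw [hdiff, hrw, measure_iUnion hdisj (fun k => hEm.inter (nu_meas ν hνm (k+1)))]
  exact tsum_congr fun k => prob_inter_indep X hXm ν hνm hνX (k+1) t

lemma tail_mono_meas (ρ : Measure ℝ) (x : ℝ) :
    Measurable fun u : ℝ => ρ (Set.Ioi (x - u)) := by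
  apply Monotone.measurable
  intro a b hab
  apply measure_mono
  intro v hv
  simp only [mem_Ioi] at hv ⊢
  linarith

end Aux3
section Aux4

variable {Ω : Type*} [MeasureSpace Ω] [IsProbabilityMeasure (ℙ : Measure Ω)]

lemma cond_eq_lintegral (μ : Measure ℝ) [IsProbabilityMeasure μ]
    (X : ℕ → Ω → ℝ) (hXm : ∀ i, Measurable (X i))
    (hXd : ∀ i, Measure.map (X i) ℙ = μ)
    (hXi : iIndepFun X ℙ)
    (ν : Ω → ℕ) (hνm : Measurable ν)
    (p : ℝ) (hp0 : 0 < p) (hp1 : p < 1)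
    (hgeom : ∀ k : ℕ, 1 ≤ k →
      ℙ {ω | ν ω = k} = ENNReal.ofReal (p * (1 - p) ^ (k - 1)))
    (hνX : IndepFun ν (fun ω i => X i ω) ℙ) (x : ℝ) :
    ℙ[|{ω | 1 < ν ω}] {ω | x < ∑ i ∈ Finset.range (ν ω), X i ω}
      = ∫⁻ u, ℙ {ω | x - u < ∑ i ∈ Finset.range (ν ω), X i ω} ∂μ := by
  have h0 : (0:ℝ) ≤ 1 - p := by linarith
  set E := {ω | x < ∑ i ∈ Finset.range (ν ω), X i ω} with hE
  have hEm : MeasurableSet E := measurableSet_lt measurable_const (meas_S X hXm ν hνm)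
  have hsm : MeasurableSet {ω | 1 < ν ω} := hνm measurableSet_Ioi
  -- laws of partial sums
  set Lk : ℕ → Measure ℝ := fun n => Measure.map (fun ω => ∑ i ∈ Finset.range n, X i ω) ℙ
    with hLk
  have hLkapp : ∀ n t, Lk n (Set.Ioi t) = ℙ {ω | t < ∑ i ∈ Finset.range n, X i ω} := by
    intro n t
    rw [hLk, Measure.map_apply (by exact Finset.measurable_sum (Finset.range n) fun i _ => hXm i)
      measurableSet_Ioi]
    rfl
  -- decomposition of the intersection
  have hrw : {ω | 1 < ν ω} ∩ E = ⋃ k : ℕ, E ∩ {ω | ν ω = k + 2} := by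
    ext ω
    simp only [mem_inter_iff, mem_setOf_eq, mem_iUnion]
    constructor
    · rintro ⟨hν, hx⟩
      exact ⟨ν ω - 2, hx, by omega⟩
    · rintro ⟨k, hx, hk⟩
      exact ⟨by omega, hx⟩
  have hdisj : Pairwise (Function.onFun Disjoint fun k : ℕ => E ∩ {ω | ν ω = k + 2}) := by
    intro a b hab
    simp only [Function.onFun, Set.disjoint_left]
    rintro ω ⟨-, ha⟩ ⟨-, hb⟩
    simp only [mem_setOf_eq] at ha hb
    omega
  have hinter : ℙ ({ω | 1 < ν ω} ∩ E)
      = ∑' k : ℕ, ℙ {ω | ν ω = k + 2} * Lk (k+2) (Set.Ioi x) := by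
    rw [hrw, measure_iUnion hdisj (fun k => hEm.inter (nu_meas ν hνm (k+2)))]
    exact tsum_congr fun k => prob_inter_indep X hXm ν hνm hνX (k+2) x
  -- rewrite each summand
  have hterm : ∀ k : ℕ, ℙ {ω | ν ω = k + 2} * Lk (k+2) (Set.Ioi x)
      = ENNReal.ofReal (1 - p) *
        ∫⁻ u, ℙ {ω | ν ω = k + 1} * Lk (k+1) (Set.Ioi (x - u)) ∂μ := by
    intro k
    have h1 : ℙ {ω | ν ω = k + 2} = ENNReal.ofReal (1 - p) * ℙ {ω | ν ω = k + 1} := by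
      rw [show k + 2 = (k+1) + 1 by omega, geom_succ ν p hgeom (k+1), geom_succ ν p hgeom k,
        ← ENNReal.ofReal_mul h0]
      congr 1
      ring
    have h2 : Lk (k+2) (Set.Ioi x) = ∫⁻ u, Lk (k+1) (Set.Ioi (x - u)) ∂μ := by
      rw [hLkapp (k+2) x]
      exact sum_succ_tail_eq μ X hXm hXd hXi (k+1) x
    rw [h1, h2, mul_assoc]
    congr 1
    rw [← lintegral_const_mul' _ _ (measure_ne_top _ _)]
  have hswap : ∑' k : ℕ, ∫⁻ u, ℙ {ω | ν ω = k + 1} * Lk (k+1) (Set.Ioi (x - u)) ∂μ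
      = ∫⁻ u, ℙ {ω | x - u < ∑ i ∈ Finset.range (ν ω), X i ω} ∂μ := by
    rw [← lintegral_tsum (fun k => ((tail_mono_meas (Lk (k+1)) x).const_mul _).aemeasurable)]
    refine lintegral_congr fun u => ?_
    exact (geom_tail μ X hXm hXi ν hνm p hp0 hp1 hgeom hνX (x - u)).symm
  have hA : ℙ ({ω | 1 < ν ω} ∩ E) = ENNReal.ofReal (1 - p) *
      ∫⁻ u, ℙ {ω | x - u < ∑ i ∈ Finset.range (ν ω), X i ω} ∂μ := by
    rw [hinter, tsum_congr hterm, ENNReal.tsum_mul_left, hswap]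
  rw [cond_apply hsm ℙ E, hA, nu_gt_one ν hνm p hp0 hp1 hgeom, ← mul_assoc,
    ENNReal.inv_mul_cancel (by simp only [ne_eq, ENNReal.ofReal_eq_zero, not_le]; linarith) ENNReal.ofReal_ne_top, one_mul]

end Aux4

/-- Upper bound for P(S_ν > x | ν > 1). -/
theorem cond_geometric_sum_upper_bound {Ω : Type*} [MeasureSpace Ω]
    [IsProbabilityMeasure (ℙ : Measure Ω)]
    (μ : Measure ℝ) [IsProbabilityMeasure μ]
    (hsupp : μ (Set.Iio 0) = 0) (hunb : ∀ x, 0 < μ (Set.Ioi x))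
    (X : ℕ → Ω → ℝ) (hXm : ∀ i, Measurable (X i))
    (hXd : ∀ i, Measure.map (X i) ℙ = μ)
    (hXi : iIndepFun X ℙ)
    (ν : Ω → ℕ) (hνm : Measurable ν)
    (p : ℝ) (hp0 : 0 < p) (hp1 : p < 1)
    (hgeom : ∀ k : ℕ, 1 ≤ k →
      ℙ {ω | ν ω = k} = ENNReal.ofReal (p * (1 - p) ^ (k - 1)))
    (hνX : IndepFun ν (fun ω i => X i ω) ℙ)
    (h : ℝ → ℝ) (x : ℝ) (hh0 : 0 ≤ h x) (hh : h x ≤ x / 2) :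
    (ℙ[|{ω | 1 < ν ω}]
        {ω | x < ∑ i ∈ Finset.range (ν ω), X i ω}).toReal ≤
      (1 / p) * (1 + Delta (fun ω => ∑ i ∈ Finset.range (ν ω), X i ω) p μ (x - h x)) *
          tail μ (x - h x) * (μ (Set.Iic (h x))).toReal +
      (1 / p) * (1 + DeltaSup (fun ω => ∑ i ∈ Finset.range (ν ω), X i ω) p μ (h x) (x - h x)) *
          (∫ y in Set.Ioc (h x) (x - h x), tail μ (x - y) ∂μ) +
      tail μ (x - h x) := by
  set S : Ω → ℝ := fun ω => ∑ i ∈ Finset.range (ν ω), X i ω with hS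
  have hcond := cond_eq_lintegral μ X hXm hXd hXi ν hνm p hp0 hp1 hgeom hνX x
  have hpne : p ≠ 0 := ne_of_gt hp0
  have htpos : ∀ y, 0 < tail μ y := fun y =>
    ENNReal.toReal_pos (hunb y).ne' (measure_ne_top μ _)
  have htail_le_one : ∀ y, tail μ y ≤ 1 := by
    intro y
    have : (μ (Set.Ioi y)).toReal ≤ (1 : ℝ≥0∞).toReal :=
      ENNReal.toReal_mono ENNReal.one_ne_top prob_le_one
    simpa [tail] using this
  have htail_anti : ∀ a b : ℝ, a ≤ b → tail μ b ≤ tail μ a := fun a b hab =>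
    ENNReal.toReal_mono (measure_ne_top _ _) (measure_mono (Set.Ioi_subset_Ioi hab))
  have hPR : ∀ y : ℝ, (1/p) * (1 + Delta S p μ y) * tail μ y = (ℙ {ω | y < S ω}).toReal := by
    intro y
    have ht := (htpos y).ne'
    simp only [Delta]
    field_simp
    ring
  have hProb : ∀ y : ℝ, ℙ {ω | y < S ω}
      = ENNReal.ofReal ((1/p) * (1 + Delta S p μ y) * tail μ y) := by
    intro y
    rw [hPR y, ENNReal.ofReal_toReal (measure_ne_top _ _)]
  have hd2 : h x ≤ x - h x := by linarith
  have hDelta_lb : ∀ y : ℝ, -1 ≤ Delta S p μ y := by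
    intro y
    simp only [Delta]
    have : 0 ≤ (ℙ {ω | y < S ω}).toReal / ((1/p) * tail μ y) :=
      div_nonneg ENNReal.toReal_nonneg (mul_nonneg (by positivity) (htpos y).le)
    linarith
  have hbdd : BddAbove (Delta S p μ '' Set.Icc (h x) (x - h x)) := by
    refine ⟨p / tail μ (x - h x), ?_⟩
    rintro z ⟨y, hy, rfl⟩
    simp only [Delta]
    have h1 : (ℙ {ω | y < S ω}).toReal ≤ 1 := by
      have : (ℙ {ω | y < S ω}).toReal ≤ (1 : ℝ≥0∞).toReal :=
        ENNReal.toReal_mono ENNReal.one_ne_top prob_le_one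
      simpa using this
    have h2 : (1/p) * tail μ (x - h x) ≤ (1/p) * tail μ y :=
      mul_le_mul_of_nonneg_left (htail_anti y (x - h x) hy.2) (by positivity)
    have h3 : 0 < (1/p) * tail μ (x - h x) := by
      have := htpos (x - h x); positivity
    have h4 := div_le_div₀ (by norm_num) h1 h3 h2
    have h5 : (1:ℝ) / ((1/p) * tail μ (x - h x)) = p / tail μ (x - h x) := by
      field_simp
    rw [h5] at h4
    linarith
  set D := DeltaSup S p μ (h x) (x - h x) with hD
  have hDle : ∀ y ∈ Set.Icc (h x) (x - h x), Delta S p μ y ≤ D := fun y hy =>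
    le_csSup hbdd ⟨y, hy, rfl⟩
  have hD_lb : -1 ≤ D := le_trans (hDelta_lb (x - h x)) (hDle _ ⟨hd2, le_refl _⟩)
  have hmono : Monotone fun u : ℝ => tail μ (x - u) := fun a b hab =>
    htail_anti _ _ (by linarith)
  have hmeas_tail : Measurable fun u : ℝ => tail μ (x - u) := hmono.measurable
  have hint : Integrable (fun u => tail μ (x - u))
      (μ.restrict (Set.Ioc (h x) (x - h x))) := by
    refine Integrable.mono' (integrable_const 1) hmeas_tail.aestronglyMeasurable ?_
    refine ae_of_all _ fun u => ?_
    rw [Real.norm_eq_abs,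
      abs_of_nonneg (show (0:ℝ) ≤ tail μ (x - u) from ENNReal.toReal_nonneg)]
    exact htail_le_one _
  have hintnn : 0 ≤ ∫ y in Set.Ioc (h x) (x - h x), tail μ (x - y) ∂μ :=
    integral_nonneg fun y => ENNReal.toReal_nonneg
  -- split the integral
  have hsplit : ∫⁻ u, ℙ {ω | x - u < S ω} ∂μ
      = (∫⁻ u in Set.Iic (h x), ℙ {ω | x - u < S ω} ∂μ)
        + (∫⁻ u in Set.Ioc (h x) (x - h x), ℙ {ω | x - u < S ω} ∂μ)
        + (∫⁻ u in Set.Ioi (x - h x), ℙ {ω | x - u < S ω} ∂μ) := by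
    calc ∫⁻ u, ℙ {ω | x - u < S ω} ∂μ
        = ∫⁻ u in Set.univ, ℙ {ω | x - u < S ω} ∂μ := (setLIntegral_univ _).symm
      _ = ∫⁻ u in Set.Iic (h x) ∪ Set.Ioi (h x), ℙ {ω | x - u < S ω} ∂μ := by
          rw [Set.Iic_union_Ioi]
      _ = (∫⁻ u in Set.Iic (h x), ℙ {ω | x - u < S ω} ∂μ)
            + ∫⁻ u in Set.Ioi (h x), ℙ {ω | x - u < S ω} ∂μ :=
          lintegral_union measurableSet_Ioi (Set.Iic_disjoint_Ioi le_rfl)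
      _ = (∫⁻ u in Set.Iic (h x), ℙ {ω | x - u < S ω} ∂μ)
            + ((∫⁻ u in Set.Ioc (h x) (x - h x), ℙ {ω | x - u < S ω} ∂μ)
              + ∫⁻ u in Set.Ioi (x - h x), ℙ {ω | x - u < S ω} ∂μ) := by
          rw [← Set.Ioc_union_Ioi_eq_Ioi hd2,
            lintegral_union measurableSet_Ioi (Set.Ioc_disjoint_Ioi le_rfl)]
      _ = _ := (add_assoc _ _ _).symm
  -- first piece
  have hB1 : ∫⁻ u in Set.Iic (h x), ℙ {ω | x - u < S ω} ∂μ
      ≤ ENNReal.ofReal ((1/p) * (1 + Delta S p μ (x - h x)) * tail μ (x - h x)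
          * (μ (Set.Iic (h x))).toReal) := by
    calc ∫⁻ u in Set.Iic (h x), ℙ {ω | x - u < S ω} ∂μ
        ≤ ∫⁻ _ in Set.Iic (h x), ℙ {ω | x - h x < S ω} ∂μ := by
          refine setLIntegral_mono measurable_const fun u hu => ?_
          refine measure_mono fun ω hω => ?_
          simp only [Set.mem_Iic] at hu
          simp only [Set.mem_setOf_eq] at hω ⊢
          linarith
      _ = ℙ {ω | x - h x < S ω} * μ (Set.Iic (h x)) := setLIntegral_const _ _
      _ = _ := by
          rw [hProb (x - h x), ← ENNReal.ofReal_toReal (measure_ne_top μ (Set.Iic (h x))),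
            ← ENNReal.ofReal_mul (by rw [hPR]; exact ENNReal.toReal_nonneg)]
          rw [ENNReal.ofReal_toReal (measure_ne_top μ _)]
  -- middle piece
  have hc : 0 ≤ (1/p) * (1 + D) := mul_nonneg (by positivity) (by linarith)
  have hB2 : ∫⁻ u in Set.Ioc (h x) (x - h x), ℙ {ω | x - u < S ω} ∂μ
      ≤ ENNReal.ofReal ((1/p) * (1 + D)
          * ∫ y in Set.Ioc (h x) (x - h x), tail μ (x - y) ∂μ) := by
    calc ∫⁻ u in Set.Ioc (h x) (x - h x), ℙ {ω | x - u < S ω} ∂μ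
        ≤ ∫⁻ u in Set.Ioc (h x) (x - h x),
            ENNReal.ofReal ((1/p) * (1 + D) * tail μ (x - u)) ∂μ := by
          refine setLIntegral_mono ((hmeas_tail.const_mul _).ennreal_ofReal) fun u hu => ?_
          rw [hProb (x - u)]
          apply ENNReal.ofReal_le_ofReal
          have hy : x - u ∈ Set.Icc (h x) (x - h x) := by
            simp only [Set.mem_Ioc] at hu
            rw [Set.mem_Icc]
            constructor <;> linarith [hu.1, hu.2]
          have hd := hDle (x - u) hy
          have ht := (htpos (x - u)).le
          have h1p : (0:ℝ) ≤ 1/p := by positivity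
          exact mul_le_mul_of_nonneg_right
            (mul_le_mul_of_nonneg_left (by linarith) h1p) ht
      _ = ENNReal.ofReal ((1/p) * (1 + D))
            * ∫⁻ u in Set.Ioc (h x) (x - h x), ENNReal.ofReal (tail μ (x - u)) ∂μ := by
          rw [← lintegral_const_mul' _ _ ENNReal.ofReal_ne_top]
          refine lintegral_congr fun u => ?_
          rw [← ENNReal.ofReal_mul hc]
      _ = ENNReal.ofReal ((1/p) * (1 + D))
            * ENNReal.ofReal (∫ y in Set.Ioc (h x) (x - h x), tail μ (x - y) ∂μ) := by
          congr 1
          rw [← ofReal_integral_eq_lintegral_ofReal hint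
            (ae_of_all _ fun u => ENNReal.toReal_nonneg)]
      _ = _ := by rw [← ENNReal.ofReal_mul hc]
  -- last piece
  have hB3 : ∫⁻ u in Set.Ioi (x - h x), ℙ {ω | x - u < S ω} ∂μ
      ≤ ENNReal.ofReal (tail μ (x - h x)) := by
    calc ∫⁻ u in Set.Ioi (x - h x), ℙ {ω | x - u < S ω} ∂μ
        ≤ ∫⁻ _ in Set.Ioi (x - h x), 1 ∂μ :=
          setLIntegral_mono measurable_const fun u _ => prob_le_one
      _ = μ (Set.Ioi (x - h x)) := by rw [setLIntegral_const, one_mul]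
      _ = ENNReal.ofReal (tail μ (x - h x)) :=
          (ENNReal.ofReal_toReal (measure_ne_top μ _)).symm
  -- combine
  have ht1nn : 0 ≤ (1/p) * (1 + Delta S p μ (x - h x)) * tail μ (x - h x)
      * (μ (Set.Iic (h x))).toReal :=
    mul_nonneg (by rw [hPR]; exact ENNReal.toReal_nonneg) ENNReal.toReal_nonneg
  have ht2nn : 0 ≤ (1/p) * (1 + D) * ∫ y in Set.Ioc (h x) (x - h x), tail μ (x - y) ∂μ :=
    mul_nonneg hc hintnn
  have ht3nn : 0 ≤ tail μ (x - h x) := ENNReal.toReal_nonneg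
  have hfinal : ℙ[|{ω | 1 < ν ω}] {ω | x < S ω}
      ≤ ENNReal.ofReal ((1/p) * (1 + Delta S p μ (x - h x)) * tail μ (x - h x)
            * (μ (Set.Iic (h x))).toReal
          + (1/p) * (1 + D) * (∫ y in Set.Ioc (h x) (x - h x), tail μ (x - y) ∂μ)
          + tail μ (x - h x)) := by
    rw [hcond, hsplit, ENNReal.ofReal_add (by positivity) ht3nn,
      ENNReal.ofReal_add ht1nn ht2nn]
    exact add_le_add (add_le_add hB1 hB2) hB3
  calc (ℙ[|{ω | 1 < ν ω}] {ω | x < S ω}).toReal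
      ≤ (ENNReal.ofReal ((1/p) * (1 + Delta S p μ (x - h x)) * tail μ (x - h x)
            * (μ (Set.Iic (h x))).toReal
          + (1/p) * (1 + D) * (∫ y in Set.Ioc (h x) (x - h x), tail μ (x - y) ∂μ)
          + tail μ (x - h x))).toReal :=
        ENNReal.toReal_mono ENNReal.ofReal_ne_top hfinal
    _ = _ := ENNReal.toReal_ofReal (by positivity)
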